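/- For every real u > 0, ∑_{k=0}^∞ u^k / (k! · (k+1)!) ≥ u / (1 - e^{-u}). -/
import Mathlib

open Finset

lemma fact_ineq (n : ℕ) :
    (1:ℝ)/n.factorial ≤ ∑ k ∈ Finset.range (n+1),
      1/((k.factorial:ℝ) * (k+1).factorial * (n+1-k).factorial) := by
  match n with
  | 0 => norm_num
  | 1 => norm_num [Finset.sum_range_succ, Nat.factorial]
  | (m+2) =>
    set f : ℕ → ℝ := fun k => 1/((k.factorial:ℝ) * (k+1).factorial * ((m+2)+1-k).factorial) with hf
    have hsub : ({0,1,2} : Finset ℕ) ⊆ Finset.range (m+2+1) := by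
      intro x hx; fin_cases hx <;> simp
    have hmono : ∑ k ∈ ({0,1,2} : Finset ℕ), f k ≤ ∑ k ∈ Finset.range (m+2+1), f k := by
      apply Finset.sum_le_sum_of_subset_of_nonneg hsub
      intro i _ _; positivity
    have h1 : (0:ℝ) < (m+1).factorial := by positivity
    have h2 : ((m+2).factorial : ℝ) = (m+2) * (m+1).factorial := by
      rw [show m+2 = (m+1)+1 from rfl, Nat.factorial_succ]; push_cast; ring
    have h3 : ((m+3).factorial : ℝ) = (m+3) * (m+2) * (m+1).factorial := by
      rw [show m+3 = (m+2)+1 from rfl, Nat.factorial_succ]; push_cast; rw [h2]; ring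
    have hval : ∑ k ∈ ({0,1,2} : Finset ℕ), f k
        = 1/((m+3).factorial:ℝ) + 1/(2*((m+2).factorial:ℝ)) + 1/(12*((m+1).factorial:ℝ)) := by
      simp [hf, Nat.factorial]
      norm_num
      ring
    have key : (1:ℝ)/(m+2).factorial ≤ ∑ k ∈ ({0,1,2} : Finset ℕ), f k := by
      rw [hval, h2, h3]
      have hm0 : (0:ℝ) ≤ (m:ℝ) := by positivity
      have hmm : (m:ℝ) ≤ (m:ℝ)^2 := by
        rcases Nat.eq_zero_or_pos m with hm | hm
        · subst hm; norm_num
        · have : (1:ℝ) ≤ m := by exact_mod_cast hm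
          nlinarith
      rw [div_add_div _ _ (by positivity) (by positivity),
        div_add_div _ _ (by positivity) (by positivity),
        div_le_div_iff₀ (by positivity) (by positivity)]
      have hF : (0:ℝ) < ((1+m).factorial:ℝ)^3 := by positivity
      have hmm3 : 4*(m:ℝ) ≤ 3*(m:ℝ)^3 + (m:ℝ)^4 := by
        rcases Nat.eq_zero_or_pos m with hm | hm
        · subst hm; norm_num
        · have : (1:ℝ) ≤ m := by exact_mod_cast hm
          nlinarith
      ring_nf
      nlinarith [mul_le_mul_of_nonneg_right hmm3 hF.le]
    exact le_trans key hmono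

theorem stmt_4 : ∀ u : ℝ, 0 < u →
    (∑' k : ℕ, u ^ k / ((k.factorial : ℝ) * ((k + 1).factorial : ℝ)))
      ≥ u / (1 - Real.exp (-u)) := by
  intro u hu
  set a : ℕ → ℝ := fun k => u ^ k / ((k.factorial : ℝ) * ((k + 1).factorial : ℝ)) with ha
  set b : ℕ → ℝ := fun k => u ^ k / (k.factorial : ℝ) with hb
  have ha_nonneg : ∀ k, 0 ≤ a k := fun k => by positivity
  have hb_nonneg : ∀ k, 0 ≤ b k := fun k => by positivity
  have hb_sum : Summable b := Real.summable_pow_div_factorial u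
  have ha_le : ∀ k, a k ≤ b k := by
    intro k
    apply div_le_div_of_nonneg_left (by positivity) (by positivity)
    have h1 : (1:ℝ) ≤ ((k+1).factorial : ℝ) := by exact_mod_cast Nat.one_le_iff_ne_zero.mpr (Nat.factorial_ne_zero _)
    nlinarith [show (0:ℝ) < (k.factorial:ℝ) by positivity]
  have ha_sum : Summable a := Summable.of_nonneg_of_le ha_nonneg ha_le hb_sum
  have ha_norm : Summable (fun k => ‖a k‖) := by
    simpa [Real.norm_of_nonneg (ha_nonneg _)] using ha_sum
  have hb_norm : Summable (fun k => ‖b k‖) := by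
    simpa [Real.norm_of_nonneg (hb_nonneg _)] using hb_sum
  have hexp : Real.exp u = ∑' n, b n := by
    rw [Real.exp_eq_exp_ℝ, NormedSpace.exp_eq_tsum_div]
  set c : ℕ → ℝ := fun n => ∑ k ∈ Finset.range (n+1), a k * b (n - k) with hc
  have hcauchy : (∑' n, a n) * (∑' n, b n) = ∑' n, c n :=
    tsum_mul_tsum_eq_tsum_sum_range_of_summable_norm ha_norm hb_norm
  have hc_sum : Summable c := by
    have := (summable_norm_sum_mul_range_of_summable_norm ha_norm hb_norm).of_norm
    simpa [hc] using this
  -- term computation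
  have hterm : ∀ n k : ℕ, k ≤ n → a k * b (n - k)
      = u ^ n * (1 / ((k.factorial:ℝ) * (k+1).factorial * (n-k).factorial)) := by
    intro n k hk
    simp only [ha, hb]
    rw [div_mul_div_comm, ← pow_add, Nat.add_sub_cancel' hk]
    ring
  -- termwise bound
  have hkey : ∀ n : ℕ, u ^ (n+1) / (n.factorial : ℝ) + a (n+1) ≤ c (n+1) := by
    intro n
    have hsplit : c (n+1) = (∑ k ∈ Finset.range (n+1), a k * b (n+1-k)) + a (n+1) * b 0 := by
      simp [hc, Finset.sum_range_succ]
    have hb0 : b 0 = 1 := by simp [hb]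
    have hlow : u ^ (n+1) / (n.factorial : ℝ)
        ≤ ∑ k ∈ Finset.range (n+1), a k * b (n+1-k) := by
      have h1 := fact_ineq n
      have h2 : ∑ k ∈ Finset.range (n+1), a k * b (n+1-k)
          = u^(n+1) * ∑ k ∈ Finset.range (n+1),
              1 / ((k.factorial:ℝ) * (k+1).factorial * (n+1-k).factorial) := by
        rw [Finset.mul_sum]
        apply Finset.sum_congr rfl
        intro k hk
        exact hterm (n+1) k (by have := Finset.mem_range.mp hk; omega)
      rw [h2, div_eq_mul_one_div]
      exact mul_le_mul_of_nonneg_left h1 (by positivity)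
    rw [hsplit, hb0, mul_one]
    linarith
  -- sum up
  have hS : (∑' n, a n) * Real.exp u ≥ u * Real.exp u + (∑' n, a n) := by
    rw [hexp, hcauchy]
    have hc0 : c 0 = a 0 := by simp [hc, hb]
    have ha0 : a 0 = 1 := by simp [ha]
    have hsum1 : Summable (fun n => a (n+1)) := by
      exact (summable_nat_add_iff 1).mpr ha_sum
    have hsum2 : Summable (fun n => u ^ (n+1) / (n.factorial : ℝ)) := by
      have : (fun n : ℕ => u ^ (n+1) / (n.factorial : ℝ)) = fun n => u * b n := by
        funext n; simp [hb, pow_succ]; ring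
      rw [this]; exact hb_sum.mul_left u
    have h1 : ∑' n, c n = c 0 + ∑' n, c (n+1) := Summable.tsum_eq_zero_add hc_sum
    have h2 : (∑' n, a n) = a 0 + ∑' n, a (n+1) := Summable.tsum_eq_zero_add ha_sum
    have h3 : ∑' n, (u ^ (n+1) / (n.factorial : ℝ) + a (n+1))
        ≤ ∑' n, c (n+1) := by
      apply Summable.tsum_le_tsum hkey (hsum2.add hsum1) ((summable_nat_add_iff 1).mpr hc_sum)
    rw [Summable.tsum_add hsum2 hsum1] at h3
    have h4 : ∑' n, u ^ (n+1) / (n.factorial : ℝ) = u * ∑' n, b n := by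
      rw [← tsum_mul_left]
      apply tsum_congr
      intro n; simp [hb, pow_succ]; ring
    rw [h4] at h3
    rw [h1, h2, hc0]
    linarith
  -- finish
  have hexpu1 : Real.exp u * Real.exp (-u) = 1 := by
    rw [← Real.exp_add]; simp
  have hpos : 0 < 1 - Real.exp (-u) := by
    have : Real.exp (-u) < 1 := Real.exp_lt_one_iff.mpr (by linarith)
    linarith
  rw [ge_iff_le, div_le_iff₀ hpos]
  have hmul := mul_le_mul_of_nonneg_right hS.le (Real.exp_pos (-u)).le
  -- careful: hS is ≥, so hS.le : u * exp u + S ≤ S * exp u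
  calc u = (u * Real.exp u) * Real.exp (-u) := by
        rw [mul_assoc, hexpu1, mul_one]
    _ ≤ ((∑' n, a n) * Real.exp u - (∑' n, a n)) * Real.exp (-u) := by
        apply mul_le_mul_of_nonneg_right _ (Real.exp_pos (-u)).le
        linarith
    _ = (∑' n, a n) * (1 - Real.exp (-u)) := by
        linear_combination (∑' n, a n) * hexpu1
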